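/- Let m ≥ 1 and let J be the 2m×2m block matrix [[0, -I_m],[I_m, 0]], which is unitary with J² = -I. Let u be a 2m×2m complex unitary matrix. Then J·ū·J⁻¹ = u⁻¹ (where ū is the entrywise complex conjugate of u) if and only if there exists a 2m×2m complex unitary matrix v with u = v·J·vᵀ·J⁻¹. (This expresses the triviality of H¹(Z/2; U(2m)) for the action σ_H(u) = J·ū·J⁻¹ of Z/2 on U(2m): σ_H(u) = u⁻¹ if and only if u = v·σ_H(v⁻¹) for some unitary v.) -/

import Mathlib

open Matrix Polynomial Module.End

section Helpers

variable {n : Type*} [Fintype n] [DecidableEq n]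

lemma aux_aeval_conj (g g' x : Matrix n n ℂ) (h : g * g' = 1) (h' : g' * g = 1)
    (q : ℂ[X]) : aeval (g * x * g') q = g * aeval x q * g' := by
  induction q using Polynomial.induction_on' with
  | add p q hp hq => simp only [map_add, hp, hq, mul_add, add_mul]
  | monomial k a =>
    have hpow : ∀ k : ℕ, (g * x * g') ^ k = g * x ^ k * g' := by
      intro k; induction k with
      | zero => simpa using h.symm
      | succ k ih =>
          rw [pow_succ, ih]
          simp only [mul_assoc]
          rw [← mul_assoc g' g, h', one_mul, pow_succ]
          simp only [mul_assoc]
    rw [aeval_monomial, aeval_monomial, hpow, ← Algebra.smul_def, ← Algebra.smul_def]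
    simp [mul_smul_comm, smul_mul_assoc]

lemma aux_aeval_diagonal (d : n → ℂ) (q : ℂ[X]) :
    aeval (Matrix.diagonal d) q = Matrix.diagonal (fun i => q.eval (d i)) := by
  induction q using Polynomial.induction_on' with
  | add p q hp hq => simp [map_add, hp, hq, Matrix.diagonal_add]
  | monomial k a =>
      rw [aeval_monomial, ← Algebra.smul_def, Matrix.diagonal_pow]
      ext i j
      by_cases hij : i = j <;>
        simp [Matrix.diagonal_apply, hij, eval_monomial]

lemma aux_aeval_star (x : Matrix n n ℂ) (q : ℂ[X]) :
    star (aeval x q) = aeval (star x) (q.map (starRingEnd ℂ)) := by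
  induction q using Polynomial.induction_on' with
  | add p q hp hq => simp [map_add, hp, hq, star_add]
  | monomial k a =>
      rw [aeval_monomial, Polynomial.map_monomial, aeval_monomial,
        ← Algebra.smul_def, ← Algebra.smul_def, star_smul, star_pow]
      rfl

lemma aux_aeval_map (x : Matrix n n ℂ) (q : ℂ[X]) :
    (aeval x q).map (starRingEnd ℂ) = aeval (x.map (starRingEnd ℂ)) (q.map (starRingEnd ℂ)) := by
  induction q using Polynomial.induction_on' with
  | add p q hp hq => simp [map_add, hp, hq, Matrix.map_add]
  | monomial k a =>
      rw [aeval_monomial, Polynomial.map_monomial, aeval_monomial]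
      rw [← RingHom.mapMatrix_apply, _root_.map_mul, map_pow]
      congr 1
      · ext i j
        by_cases hij : i = j <;>
          simp [RingHom.mapMatrix_apply, Matrix.map_apply, Matrix.algebraMap_matrix_apply, hij]

end Helpers

set_option maxHeartbeats 2000000 in
lemma unitary_diag {n : Type*} [Fintype n] [DecidableEq n] (u : Matrix n n ℂ)
    (hu : u ∈ Matrix.unitaryGroup n ℂ) :
    ∃ (s s' : Matrix n n ℂ) (d : n → ℂ), s * s' = 1 ∧ s' * s = 1 ∧
      (∀ i, ‖d i‖ = 1) ∧ u = s * Matrix.diagonal d * s' := by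
  classical
  set std : Module.Basis n ℂ (EuclideanSpace ℂ n) := PiLp.basisFun 2 ℂ n with hstd
  set T : EuclideanSpace ℂ n →ₗ[ℂ] EuclideanSpace ℂ n := Matrix.toEuclideanLin u with hT
  set S := LinearMap.adjoint T with hS
  have hmulE : ∀ A B : Matrix n n ℂ, Matrix.toEuclideanLin (A * B)
      = Matrix.toEuclideanLin A * Matrix.toEuclideanLin B := by
    intro A B
    rw [Matrix.toEuclideanLin_eq_toLin, Matrix.toLin_mul _ (PiLp.basisFun 2 ℂ n) _]
    rfl
  have hSmat : S = Matrix.toEuclideanLin (star u) := by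
    rw [hS, hT, ← Matrix.toEuclideanLin_conjTranspose_eq_adjoint]
    rfl
  have hone : Matrix.toEuclideanLin (1 : Matrix n n ℂ) = 1 := by
    rw [Matrix.toEuclideanLin_eq_toLin, Matrix.toLin_one]
    rfl
  have hST : S * T = 1 := by rw [hSmat, hT, ← hmulE, hu.1, hone]
  have hTS : T * S = 1 := by rw [hSmat, hT, ← hmulE, hu.2, hone]
  have hstarT : star T = S := rfl
  set A := T + S with hA
  set B := Complex.I • (S - T) with hB
  have hstarS : star S = T := by
    rw [LinearMap.star_eq_adjoint, hS, LinearMap.adjoint_adjoint]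
  have hAsym : A.IsSymmetric := by
    rw [LinearMap.isSymmetric_iff_isSelfAdjoint]
    show star A = A
    rw [hA, star_add, hstarT, hstarS]
    exact add_comm S T
  have hBsym : B.IsSymmetric := by
    rw [LinearMap.isSymmetric_iff_isSelfAdjoint]
    show star B = B
    rw [hB, star_smul, star_sub, hstarT, hstarS]
    rw [Complex.star_def, Complex.conj_I, neg_smul, ← smul_neg, neg_sub]
  have hcTS : Commute T S := by rw [Commute, SemiconjBy, hTS, hST]
  have hAB : Commute A B := by
    apply Commute.smul_right
    exact Commute.add_left (hcTS.sub_right (Commute.refl T))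
      ((Commute.refl S).sub_right hcTS.symm)
  have htop2 := hAsym.iSup_iSup_eigenspace_inf_eigenspace_eq_top_of_commute hBsym hAB
  have htop : ⨆ μ : ℂ, eigenspace T μ = ⊤ := by
    rw [eq_top_iff, ← htop2]
    refine iSup_le fun α => iSup_le fun γ => ?_
    refine le_trans ?_ (le_iSup _ ((α + Complex.I * γ) / 2))
    rintro x ⟨hx1, hx2⟩
    rw [SetLike.mem_coe, mem_eigenspace_iff] at hx1 hx2
    rw [mem_eigenspace_iff]
    have hx1' : T x + S x = α • x := by simpa [hA] using hx1
    have hx2' : Complex.I • (S x - T x) = γ • x := by simpa [hB] using hx2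
    have hSx : S x = α • x - T x := by rw [← hx1']; abel
    rw [hSx] at hx2'
    have h3 : (Complex.I * 2) • T x = (Complex.I * α - γ) • x := by
      have h4 : (Complex.I * α) • x - Complex.I • T x - Complex.I • T x = γ • x := by
        simpa [smul_sub, smul_smul] using hx2'
      rw [show (Complex.I * 2) • T x = Complex.I • T x + Complex.I • T x from by
        rw [← add_smul]; ring_nf, sub_smul]
      rw [← h4]; abel
    have h5 := congrArg (fun y => ((Complex.I * 2)⁻¹ : ℂ) • y) h3
    simp only [smul_smul] at h5
    rw [inv_mul_cancel₀ (by simp [Complex.I_ne_zero] : (Complex.I * 2 : ℂ) ≠ 0), one_smul] at h5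
    rw [h5]
    congr 1
    have : (Complex.I * 2)⁻¹ = -Complex.I / 2 := by
      rw [mul_inv, Complex.inv_I]; ring
    rw [this]
    linear_combination (-α / 2) * Complex.I_mul_I
  have hnorm : ∀ (μ : ℂ) (x : EuclideanSpace ℂ n), x ∈ eigenspace T μ → x ≠ 0 → ‖μ‖ = 1 := by
    intro μ x hx hx0
    rw [mem_eigenspace_iff] at hx
    have h1 : (inner ℂ (T x) (T x) : ℂ) = inner ℂ x x := by
      rw [← LinearMap.adjoint_inner_left, ← hS]
      rw [show S (T x) = x from by
        have := congrArg (fun f => f x) hST; simpa using this]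
    rw [hx, inner_smul_left, inner_smul_right] at h1
    have hxx : (inner ℂ x x : ℂ) ≠ 0 := inner_self_ne_zero.mpr hx0
    have h2 : (starRingEnd ℂ) μ * μ = 1 := by
      have h2' : ((starRingEnd ℂ) μ * μ - 1) * (inner ℂ x x : ℂ) = 0 := by
        rw [sub_mul, one_mul, mul_assoc, h1, sub_self]
      rcases mul_eq_zero.mp h2' with h | h
      · exact sub_eq_zero.mp h
      · exact absurd h hxx
    have h3 : ‖μ‖ * ‖μ‖ = 1 := by
      have := congrArg norm h2
      simpa [norm_mul, Complex.norm_conj] using this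
    nlinarith [norm_nonneg μ]
  have hInt : DirectSum.IsInternal fun μ : ℂ => eigenspace T μ :=
    (DirectSum.isInternal_submodule_iff_iSupIndep_and_iSup_eq_top _).mpr
      ⟨Module.End.eigenspaces_iSupIndep T, htop⟩
  let v : ∀ μ : ℂ, Module.Basis (Module.Free.ChooseBasisIndex ℂ (eigenspace T μ)) ℂ (eigenspace T μ) :=
    fun μ => Module.Free.chooseBasis ℂ _
  let b := hInt.collectedBasis v
  haveI : Fintype (Σ μ : ℂ, Module.Free.ChooseBasisIndex ℂ (eigenspace T μ)) :=
    FiniteDimensional.fintypeBasisIndex b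
  let e := b.indexEquiv std
  let b' := b.reindex e
  let d : n → ℂ := fun i => (e.symm i).1
  have hb'mem : ∀ i, (b' i : EuclideanSpace ℂ n) ∈ eigenspace T (d i) := by
    intro i
    rw [Module.Basis.reindex_apply]
    exact hInt.collectedBasis_mem v (e.symm i)
  have hTb' : ∀ i, T (b' i) = d i • b' i := fun i => mem_eigenspace_iff.mp (hb'mem i)
  have hmat : LinearMap.toMatrix b' b' T = Matrix.diagonal d := by
    ext i j
    rw [LinearMap.toMatrix_apply, hTb' j, LinearEquiv.map_smul, Module.Basis.repr_self]
    by_cases h : i = j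
    · subst h; simp [Matrix.diagonal_apply_eq]
    · simp [Matrix.diagonal_apply_ne _ h, Finsupp.single_apply, Ne.symm h]
  have key := basis_toMatrix_mul_linearMap_toMatrix_mul_basis_toMatrix std b' std b' T
  have hustd : LinearMap.toMatrix std std T = u := by
    rw [hT, Matrix.toEuclideanLin_eq_toLin, LinearMap.toMatrix_toLin]
  refine ⟨std.toMatrix b', b'.toMatrix std, d, Module.Basis.toMatrix_mul_toMatrix_flip _ _,
    Module.Basis.toMatrix_mul_toMatrix_flip _ _, fun i => hnorm (d i) (b' i) (hb'mem i) (b'.ne_zero i),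
    ?_⟩
  rw [← hustd, ← key, hmat]

/-- The standard symplectic matrix `J = [[0, -I_m],[I_m, 0]]`. -/
noncomputable def Jmat (m : ℕ) : Matrix (Fin m ⊕ Fin m) (Fin m ⊕ Fin m) ℂ :=
  Matrix.fromBlocks 0 (-1) 1 0

lemma Jmat_mul_Jmat (m : ℕ) : Jmat m * Jmat m = -1 := by
  simp [Jmat, Matrix.fromBlocks_multiply, ← Matrix.fromBlocks_one, Matrix.fromBlocks_neg]

lemma Jmat_inv (m : ℕ) : (Jmat m)⁻¹ = -Jmat m := by
  apply Matrix.inv_eq_right_inv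
  rw [mul_neg, Jmat_mul_Jmat, neg_neg]

lemma Jmat_map_conj (m : ℕ) : (Jmat m).map (starRingEnd ℂ) = Jmat m := by
  ext (i | i) (j | j) <;>
    simp [Jmat, Matrix.fromBlocks, Matrix.map_apply, Matrix.one_apply, apply_ite]

lemma backward {m : ℕ} (v : Matrix (Fin m ⊕ Fin m) (Fin m ⊕ Fin m) ℂ)
    (hv : v ∈ Matrix.unitaryGroup (Fin m ⊕ Fin m) ℂ) :
    Jmat m * (v * Jmat m * v.transpose * (Jmat m)⁻¹).map (starRingEnd ℂ) * (Jmat m)⁻¹ =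
      (v * Jmat m * v.transpose * (Jmat m)⁻¹)⁻¹ := by
  rw [Jmat_inv]
  set J := Jmat m
  have hJJ : J * J = -1 := Jmat_mul_Jmat m
  set c := v.map (starRingEnd ℂ) with hc
  have h1 : cᵀ * v = 1 := hv.1
  have hstar : (star v).map (starRingEnd ℂ) = vᵀ := by
    ext i j
    simp [Matrix.map_apply, Matrix.conjTranspose_apply]
  have h2 : c * vᵀ = 1 := by
    have := congrArg (fun M => Matrix.map M (starRingEnd ℂ)) hv.2
    simp only [Matrix.map_mul] at this
    rwa [hstar, Matrix.map_one _ (map_zero _) (map_one _)] at this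
  symm
  apply Matrix.inv_eq_left_inv
  have hmap : (v * J * vᵀ * -J).map (starRingEnd ℂ) = c * J * cᵀ * -J := by
    rw [← RingHom.mapMatrix_apply, _root_.map_mul, _root_.map_mul, _root_.map_mul, map_neg]
    simp only [RingHom.mapMatrix_apply, Jmat_map_conj, hc, Matrix.transpose_map, J]
  rw [hmap]
  have h1' : ∀ X, cᵀ * (v * X) = X := fun X => by rw [← mul_assoc, h1, one_mul]
  have h2' : ∀ X, c * (vᵀ * X) = X := fun X => by rw [← mul_assoc, h2, one_mul]
  have hJJ' : ∀ X, J * (J * X) = -X := fun X => by rw [← mul_assoc, hJJ, neg_one_mul]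
  simp only [mul_assoc, mul_neg, neg_mul, neg_neg, one_mul, hJJ', h1', h2', h2, hJJ]

lemma forward {m : ℕ} (u : Matrix (Fin m ⊕ Fin m) (Fin m ⊕ Fin m) ℂ)
    (hu : u ∈ Matrix.unitaryGroup (Fin m ⊕ Fin m) ℂ)
    (hσ : Jmat m * u.map (starRingEnd ℂ) * (Jmat m)⁻¹ = u⁻¹) :
    ∃ v ∈ Matrix.unitaryGroup (Fin m ⊕ Fin m) ℂ,
      u = v * Jmat m * v.transpose * (Jmat m)⁻¹ := by
  classical
  obtain ⟨s, s', d, hss', hs's, hd, hueq⟩ := unitary_diag u hu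
  set J := Jmat m with hJdef
  have hJJ : J * J = -1 := Jmat_mul_Jmat m
  have hJnJ : J * -J = 1 := by rw [mul_neg, hJJ, neg_neg]
  have hnJJ : -J * J = 1 := by rw [neg_mul, hJJ, neg_neg]
  -- the interpolating square-root polynomial
  set Sf : Finset ℂ := Finset.image d Finset.univ with hSf
  set p : Polynomial ℂ := Lagrange.interpolate Sf id (fun z => z ^ ((1 : ℂ)/2)) with hp
  have hd0 : ∀ i, d i ≠ 0 := fun i => by
    intro h; have := hd i; rw [h] at this; simp at this
  have hpval : ∀ i, p.eval (d i) = (d i) ^ ((1 : ℂ)/2) := by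
    intro i
    have : Set.InjOn id (Sf : Set ℂ) := Function.injective_id.injOn
    exact Lagrange.eval_interpolate_at_node _ this (by simp [hSf])
  have hsq : ∀ i, p.eval (d i) * p.eval (d i) = d i := by
    intro i
    rw [hpval, ← Complex.cpow_add _ _ (hd0 i)]
    norm_num
  have hnp : ∀ i, ‖p.eval (d i)‖ = 1 := by
    intro i
    have h := congrArg norm (hsq i)
    rw [norm_mul, hd i] at h
    nlinarith [norm_nonneg (p.eval (d i))]
  -- square root matrix
  set w : Matrix (Fin m ⊕ Fin m) (Fin m ⊕ Fin m) ℂ := aeval u p with hw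
  have haeq : ∀ q r : Polynomial ℂ, (∀ i, q.eval (d i) = r.eval (d i)) →
      aeval u q = aeval u r := by
    intro q r h
    rw [hueq, aux_aeval_conj _ _ _ hss' hs's, aux_aeval_conj _ _ _ hss' hs's,
      aux_aeval_diagonal, aux_aeval_diagonal]
    have h' : (fun i => eval (d i) q) = fun i => eval (d i) r := _root_.funext h
    rw [h']
  have hww : w * w = u := by
    rw [hw, ← _root_.map_mul, show u = aeval u (X : Polynomial ℂ) from (aeval_X u).symm]
    rw [show aeval (aeval u X) (p * p) = aeval u (p * p) from by rw [aeval_X]]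
    exact haeq _ _ fun i => by simp [hsq i]
  -- inverse of u
  have hdinv : ∀ i, d i * (starRingEnd ℂ) (d i) = 1 := by
    intro i
    have : Complex.normSq (d i) = 1 := by
      rw [Complex.normSq_eq_norm_sq, hd i]; norm_num
    rw [Complex.mul_conj, this]; simp
  have hs's' : ∀ X, s' * (s * X) = X := fun X => by rw [← mul_assoc, hs's, one_mul]
  have hdd : ∀ (D D' : Fin m ⊕ Fin m → ℂ) (X : Matrix (Fin m ⊕ Fin m) (Fin m ⊕ Fin m) ℂ),
      diagonal D * (diagonal D' * X) = diagonal (fun i => D i * D' i) * X := fun D D' X => by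
    rw [← mul_assoc, Matrix.diagonal_mul_diagonal]
  have collapse : ∀ D D' : Fin m ⊕ Fin m → ℂ,
      (s * diagonal D * s') * (s * diagonal D' * s') = s * (diagonal fun i => D i * D' i) * s' := by
    intro D D'
    simp only [mul_assoc, hs's', hdd]
  set u' : Matrix (Fin m ⊕ Fin m) (Fin m ⊕ Fin m) ℂ :=
    s * diagonal (fun i => (starRingEnd ℂ) (d i)) * s' with hu'
  have huu' : u * u' = 1 := by
    rw [hueq, hu', collapse]
    have : (fun i => d i * (starRingEnd ℂ) (d i)) = fun _ => (1 : ℂ) := funext hdinv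
    rw [this, Matrix.diagonal_one, mul_one, hss']
  have hinv : u⁻¹ = u' := Matrix.inv_eq_right_inv huu'
  have hstaru : star u = u' := by
    rw [← hinv]
    exact (Matrix.inv_eq_left_inv hu.1).symm
  -- star w
  have hevalconj : ∀ (z : ℂ), (p.map (starRingEnd ℂ)).eval ((starRingEnd ℂ) z) =
      (starRingEnd ℂ) (p.eval z) := by
    intro z
    rw [Polynomial.eval_map]
    exact Polynomial.eval₂_at_apply _ z
  have hstarw : star w = aeval u' (p.map (starRingEnd ℂ)) := by
    rw [hw, aux_aeval_star, hstaru]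
  have hwunit : w ∈ Matrix.unitaryGroup (Fin m ⊕ Fin m) ℂ := by
    rw [Matrix.mem_unitaryGroup_iff']
    rw [hstarw, hu', aux_aeval_conj _ _ _ hss' hs's, aux_aeval_diagonal, hw, hueq,
      aux_aeval_conj _ _ _ hss' hs's, aux_aeval_diagonal, collapse]
    have : (fun i => (p.map (starRingEnd ℂ)).eval ((starRingEnd ℂ) (d i)) * p.eval (d i))
        = fun _ => (1 : ℂ) := by
      funext i
      rw [hevalconj]
      have h1 : Complex.normSq (p.eval (d i)) = 1 := by
        rw [Complex.normSq_eq_norm_sq, hnp i]; norm_num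
      rw [mul_comm, Complex.mul_conj, h1]; simp
    rw [this, Matrix.diagonal_one, mul_one, hss']
  -- the cocycle property of w
  have hσ' : J * u.map (starRingEnd ℂ) * -J = u' := by
    rw [← hinv, ← hσ, hJdef, Jmat_inv]
  have hσw : J * w.map (starRingEnd ℂ) * -J = star w := by
    rw [hstarw, hw, aux_aeval_map, ← aux_aeval_conj _ _ _ hJnJ hnJJ, hσ']
  -- apply entrywise conjugation to hσw
  have hww' : (w.map (starRingEnd ℂ)).map (starRingEnd ℂ) = w := by
    ext i j; simp [Matrix.map_apply]
  have hsw : (star w).map (starRingEnd ℂ) = wᵀ := by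
    ext i j; simp [Matrix.map_apply, Matrix.conjTranspose_apply]
  have hnegmap : (-J).map (starRingEnd ℂ) = -J := by
    have : -J = (-1 : ℂ) • J := by simp
    rw [this]
    ext i j
    simp only [Matrix.map_apply, Matrix.smul_apply, smul_eq_mul, _root_.map_mul]
    rw [show (starRingEnd ℂ) (-1) = -1 by simp]
    congr 1
    exact congrFun (congrFun (Jmat_map_conj m) i) j
  have hwt : J * w * -J = wᵀ := by
    have := congrArg (fun M => Matrix.map M (starRingEnd ℂ)) hσw
    simp only [Matrix.map_mul] at this
    rwa [hnegmap, show (J.map (starRingEnd ℂ)) = J from Jmat_map_conj m, hww', hsw] at this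
  refine ⟨w, hwunit, ?_⟩
  rw [hJdef, Jmat_inv, ← hJdef, ← hwt, ← hww]
  have hJJ' : ∀ X, J * (J * X) = -X := fun X => by rw [← mul_assoc, hJJ, neg_one_mul]
  simp only [mul_assoc, mul_neg, neg_mul, neg_neg, one_mul, mul_one, hJJ', hJJ]

/-- For a unitary `2m×2m` complex matrix `u`, one has `J·ū·J⁻¹ = u⁻¹` if and only if there
exists a unitary matrix `v` with `u = v·J·vᵀ·J⁻¹`. (Triviality of `H¹(ℤ/2; U(2m))` for the
quaternionic action `σ_H(u) = J·ū·J⁻¹`.) -/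
theorem stmt7 (m : ℕ) (hm : 1 ≤ m)
    (u : Matrix (Fin m ⊕ Fin m) (Fin m ⊕ Fin m) ℂ)
    (hu : u ∈ Matrix.unitaryGroup (Fin m ⊕ Fin m) ℂ) :
    Jmat m * u.map (starRingEnd ℂ) * (Jmat m)⁻¹ = u⁻¹ ↔
      ∃ v ∈ Matrix.unitaryGroup (Fin m ⊕ Fin m) ℂ,
        u = v * Jmat m * v.transpose * (Jmat m)⁻¹ := by
  constructor
  · exact forward u hu
  · rintro ⟨v, hv, rfl⟩
    exact backward v hv
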